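/- For every m ≥ 0 and the Lucas numbers L_k (L_0 = 2, L_1 = 1, L_{k+2} = L_{k+1} + L_k), the polynomial x^2 + x - 1 divides x^(2m+2) + (-1)^m · L_{m+1} · x^(m+1) + (-1)^(m+1) in ℤ[x]. -/
import Mathlib


open Polynomial

def Luc : ℕ → ℤ
  | 0 => 2
  | 1 => 1
  | (n+2) => Luc (n+1) + Luc n

lemma luc_fib : ∀ n : ℕ, Luc (n+1) = (Nat.fib (n+2) : ℤ) + Nat.fib n
  | 0 => by simp [Luc]
  | 1 => by simp [Luc]; decide
  | (n+2) => by
      have h1 := luc_fib n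
      have h2 := luc_fib (n+1)
      show Luc (n+2) + Luc (n+1) = _
      rw [h1, h2]
      have e1 : Nat.fib (n+4) = Nat.fib (n+2) + Nat.fib (n+3) := Nat.fib_add_two
      have e2 : Nat.fib (n+2) = Nat.fib n + Nat.fib (n+1) := Nat.fib_add_two
      push_cast [e1, e2]
      ring

lemma cassini : ∀ m : ℕ, (Nat.fib (m+1) : ℤ)^2 - Nat.fib (m+2) * Nat.fib m = (-1)^m
  | 0 => by decide
  | (m+1) => by
      have h := cassini m
      have e : Nat.fib (m+3) = Nat.fib (m+1) + Nat.fib (m+2) := Nat.fib_add_two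
      have e2 : Nat.fib (m+2) = Nat.fib m + Nat.fib (m+1) := Nat.fib_add_two
      push_cast [e, e2] at *
      linear_combination -h

lemma pow_root {R : Type*} [CommRing R] {r : R} (hr : r^2 = 1 - r) :
    ∀ n : ℕ, r^(n+1) = (-1)^(n+1) * ((Nat.fib n : R) - (Nat.fib (n+1) : R) * r)
  | 0 => by simp
  | (n+1) => by
      have h := pow_root hr n
      have e : Nat.fib (n+2) = Nat.fib n + Nat.fib (n+1) := Nat.fib_add_two
      rw [pow_succ, h]
      push_cast [e]
      linear_combination ((-1:R)^n * (Nat.fib (n+1) : R)) * hr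

theorem stmt_10 (m : ℕ) :
    (X^2 + X - 1 : ℤ[X])
      ∣ X^(2*m+2) + C ((-1)^m * Luc (m+1)) * X^(m+1) + C ((-1)^(m+1)) := by
  rw [← AdjoinRoot.mk_eq_zero]
  set q : ℤ[X] := X^2 + X - 1 with hq
  set r := AdjoinRoot.root q with hrdef
  have hr : r^2 = 1 - r := by
    have h0 : AdjoinRoot.mk q q = 0 := AdjoinRoot.mk_self
    rw [hq] at h0
    simp only [map_sub, map_add, map_pow, map_one, AdjoinRoot.mk_X] at h0
    linear_combination h0
  -- integer identities
  have I1 : (Nat.fib (2*m+2) : ℤ) = Luc (m+1) * Nat.fib (m+1) := by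
    have := Nat.fib_add m (m+1)
    have heq : 2*m+2 = m + (m+1) + 1 := by ring
    rw [heq, luc_fib m]
    push_cast [this]
    ring
  have I2 : (Nat.fib (2*m+1) : ℤ) = Luc (m+1) * Nat.fib m + (-1)^m := by
    have hadd := Nat.fib_add m m
    have hc := cassini m
    have heq : 2*m+1 = m + m + 1 := by ring
    rw [heq, luc_fib m]
    push_cast [hadd]
    linear_combination hc
  have h1 := pow_root hr (2*m+1)
  have h2 := pow_root hr m
  simp only [map_add, map_mul, map_pow, AdjoinRoot.mk_X, AdjoinRoot.mk_C]
  have show1 : (2*m+1)+1 = 2*m+2 := rfl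
  rw [show1] at h1
  have hc1 : ((Nat.fib (2*m+2) : ℤ) : AdjoinRoot q) = ((Luc (m+1) * Nat.fib (m+1) : ℤ) : AdjoinRoot q) := by
    exact_mod_cast congrArg (Int.cast : ℤ → AdjoinRoot q) I1
  have hc2 : ((Nat.fib (2*m+1) : ℤ) : AdjoinRoot q) = ((Luc (m+1) * Nat.fib m + (-1)^m : ℤ) : AdjoinRoot q) := by
    exact_mod_cast congrArg (Int.cast : ℤ → AdjoinRoot q) I2
  have hof : ∀ z : ℤ, AdjoinRoot.of q z = (z : AdjoinRoot q) := fun z => by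
    simp [AdjoinRoot.of]
  rw [hof, hof, h1, h2]
  push_cast at hc1 hc2 ⊢
  rw [hc1, hc2]
  have hm3 : ((-1 : AdjoinRoot q))^(m*3) = (-1)^m := by
    rw [pow_mul, pow_succ, ← pow_mul, mul_comm m 2, pow_mul]
    norm_num
  linear_combination hm3
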